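/- Let μ, ν be probability measures on ℝ with finite second moment with μ ≤_cx ν, and let π̂^{HF} = λ_{(0,1)}(du) δ_{F_μ^{-1}(u)}(dx) δ_{F_ν^{-1}(u)}(dy). Then for every lifted martingale coupling M̂ ∈ Π̂^M(μ,ν), ÂW₂²(M̂, π̂^{HF}) = W₂²(μ,ν) + ∫_ℝ |y|² ν(dy) − ∫_ℝ |x|² μ(dx); in particular ÂW₂(M̂, π̂^{HF}) does not depend on the choice of M̂, so every lifted martingale coupling is an ÂW₂-minimal lifted martingale rearrangement coupling of π̂^{HF}. -/

import Mathlib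

open MeasureTheory ProbabilityTheory Set Filter

noncomputable section

/-- Lebesgue measure restricted to `(0,1)`. -/
def lam01 : Measure ℝ := volume.restrict (Set.Ioo 0 1)

/-- Cumulative distribution function `F_η(x) = η((-∞, x])`. -/
def Fcdf (η : Measure ℝ) (x : ℝ) : ℝ := (η (Set.Iic x)).toReal

/-- Left limit of the cumulative distribution function, `F_η(x-) = η((-∞, x))`. -/
def FcdfL (η : Measure ℝ) (x : ℝ) : ℝ := (η (Set.Iio x)).toReal

/-- Quantile function `F_η^{-1}(u) = inf {x : F_η(x) ≥ u}`. -/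
def qf (η : Measure ℝ) (u : ℝ) : ℝ := sInf {x | u ≤ Fcdf η x}

/-- `π` is a coupling between `μ` and `ν`. -/
def IsCoupling (π : Measure (ℝ × ℝ)) (μ ν : Measure ℝ) : Prop :=
  π.map Prod.fst = μ ∧ π.map Prod.snd = ν

/-- `W_ρ^ρ(η, η')`, the Wasserstein distance of order `ρ` raised to the power `ρ`. -/
def Wr (ρ : ℝ) (η η' : Measure ℝ) : ℝ :=
  sInf {c | ∃ π : Measure (ℝ × ℝ), IsCoupling π η η' ∧ c = ∫ p, |p.1 - p.2| ^ ρ ∂π}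

/-- The Wasserstein distance of order `ρ`. -/
def W (ρ : ℝ) (η η' : Measure ℝ) : ℝ := Wr ρ η η' ^ (1 / ρ)

/-- The stochastic order `η ≤_st η'`: the quantile functions are ordered on `(0,1)`. -/
def StochOrder (η η' : Measure ℝ) : Prop := ∀ u ∈ Set.Ioo (0 : ℝ) 1, qf η u ≤ qf η' u

/-- The convex order `μ ≤_cx ν`: `∫ f dμ ≤ ∫ f dν` for every (integrable) convex `f`. -/
def ConvexOrder (μ ν : Measure ℝ) : Prop :=
  ∀ f : ℝ → ℝ, ConvexOn ℝ Set.univ f → Integrable f μ → Integrable f ν →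
    ∫ x, f x ∂μ ≤ ∫ x, f x ∂ν

/-- `AW_ρ^ρ(π, π')`, the adapted Wasserstein distance of order `ρ` raised to the power `ρ`:
the infimum over couplings `χ` between the first marginals of
`∫ (|x-x'|^ρ + W_ρ^ρ(π_x, π'_{x'})) dχ`, where `κ, κ'` are disintegration kernels of `π, π'`. -/
def AWr (ρ : ℝ) (π π' : Measure (ℝ × ℝ)) : ℝ :=
  sInf {c | ∃ (χ : Measure (ℝ × ℝ)) (κ κ' : Kernel ℝ ℝ),
      IsCoupling χ (π.map Prod.fst) (π'.map Prod.fst) ∧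
      π = (π.map Prod.fst).compProd κ ∧ π' = (π'.map Prod.fst).compProd κ' ∧
      c = ∫ q, (|q.1 - q.2| ^ ρ + Wr ρ (κ q.1) (κ' q.2)) ∂χ}

/-- The adapted Wasserstein distance of order `ρ`. -/
def AW (ρ : ℝ) (π π' : Measure (ℝ × ℝ)) : ℝ := AWr ρ π π' ^ (1 / ρ)

/-- The lifted adapted Wasserstein distance of order `ρ`, raised to the power `ρ`, between the
lifted couplings with first marginals `μ, μ'` and kernels `p, p'`. -/
def lAWr (ρ : ℝ) (μ : Measure ℝ) (p : ℝ → Measure ℝ) (μ' : Measure ℝ)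
    (p' : ℝ → Measure ℝ) : ℝ :=
  sInf {c | ∃ χ : Measure (ℝ × ℝ), IsCoupling χ lam01 lam01 ∧
      c = ∫ q, (|q.1 - q.2| ^ ρ + |qf μ q.1 - qf μ' q.2| ^ ρ + Wr ρ (p q.1) (p' q.2)) ∂χ}

/-- The probability kernel `p` encodes a lifted coupling
`λ_{(0,1)}(du) δ_{F_μ^{-1}(u)}(dx) p_u(dy)` between `μ` and `ν`. -/
def IsLiftedCoupling (μ ν : Measure ℝ) (p : ℝ → Measure ℝ) : Prop :=
  Measurable p ∧ (∀ u, IsProbabilityMeasure (p u)) ∧ lam01.bind p = ν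

/-- The probability kernel `m` encodes a lifted martingale coupling between `μ` and `ν`. -/
def IsLiftedMartingale (μ ν : Measure ℝ) (m : ℝ → Measure ℝ) : Prop :=
  IsLiftedCoupling μ ν m ∧ ∀ᵐ u ∂lam01, (∫ y, y ∂(m u)) = qf μ u

end

section QF

open Topology

variable (η : Measure ℝ) [IsProbabilityMeasure η]

lemma Fcdf_eq_cdf (x : ℝ) : Fcdf η x = cdf η x := (cdf_eq_real η x).symm

lemma Fcdf_mono : Monotone (Fcdf η) := by
  intro a b hab
  rw [Fcdf_eq_cdf, Fcdf_eq_cdf]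
  exact monotone_cdf η hab

lemma Fcdf_nonneg (x : ℝ) : 0 ≤ Fcdf η x := by rw [Fcdf_eq_cdf]; exact cdf_nonneg η x

lemma Fcdf_le_one (x : ℝ) : Fcdf η x ≤ 1 := by rw [Fcdf_eq_cdf]; exact cdf_le_one η x

variable {η}

lemma qfSet_nonempty {u : ℝ} (hu : u < 1) : {x | u ≤ Fcdf η x}.Nonempty := by
  have h := Filter.Tendsto.eventually_const_le hu (tendsto_cdf_atTop η)
  obtain ⟨x, hx⟩ := h.exists
  exact ⟨x, by rw [Set.mem_setOf_eq, Fcdf_eq_cdf]; exact hx⟩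

lemma qfSet_bddBelow {u : ℝ} (hu : 0 < u) : BddBelow {x | u ≤ Fcdf η x} := by
  have h := Filter.Tendsto.eventually_lt_const hu (tendsto_cdf_atBot η)
  obtain ⟨x₀, hx₀⟩ := h.exists_forall_of_atBot
  refine ⟨x₀, fun x hx => ?_⟩
  by_contra hlt
  push_neg at hlt
  have := hx₀ x hlt.le
  rw [Set.mem_setOf_eq, Fcdf_eq_cdf] at hx
  linarith

lemma le_Fcdf_qf {u : ℝ} (hu : u ∈ Set.Ioo (0:ℝ) 1) : u ≤ Fcdf η (qf η u) := by
  obtain ⟨z, -, hz, hzS⟩ := exists_seq_tendsto_sInf (qfSet_nonempty (η := η) hu.2) (qfSet_bddBelow (η := η) hu.1)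
  have hmem : ∀ n, qf η u ≤ z n := fun n => csInf_le (qfSet_bddBelow hu.1) (hzS n)
  have hF : Tendsto (fun n => Fcdf η (z n)) atTop (𝓝 (Fcdf η (qf η u))) := by
    have hc : ContinuousWithinAt (cdf η) (Set.Ici (qf η u)) (qf η u) :=
      (cdf η).right_continuous (qf η u)
    have : Tendsto (fun n => cdf η (z n)) atTop (𝓝 (cdf η (qf η u))) := by
      refine hc.tendsto.comp ?_
      exact tendsto_nhdsWithin_iff.2 ⟨hz, Filter.Eventually.of_forall fun n => hmem n⟩
    simpa only [Fcdf_eq_cdf] using this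
  exact le_of_tendsto_of_tendsto' tendsto_const_nhds hF fun n => hzS n

lemma qf_le_iff {u x : ℝ} (hu : u ∈ Set.Ioo (0:ℝ) 1) : qf η u ≤ x ↔ u ≤ Fcdf η x := by
  constructor
  · intro h
    exact le_trans (le_Fcdf_qf hu) (Fcdf_mono η h)
  · intro h
    exact csInf_le (qfSet_bddBelow hu.1) h

lemma lt_qf_iff {u x : ℝ} (hu : u ∈ Set.Ioo (0:ℝ) 1) : x < qf η u ↔ Fcdf η x < u := by
  rw [← not_le, ← not_le, qf_le_iff hu]

lemma qf_monotoneOn : MonotoneOn (qf η) (Set.Ioo (0:ℝ) 1) := by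
  intro u hu v hv huv
  rw [qf_le_iff hu]
  exact le_trans huv (le_Fcdf_qf hv)

lemma qf_aemeasurable : AEMeasurable (qf η) lam01 :=
  aemeasurable_restrict_of_monotoneOn measurableSet_Ioo qf_monotoneOn

end QF

section Push

instance lam01_isProb : IsProbabilityMeasure lam01 := by
  constructor
  rw [lam01, Measure.restrict_apply MeasurableSet.univ, Set.univ_inter, Real.volume_Ioo]
  norm_num

variable {η : Measure ℝ} [IsProbabilityMeasure η]

lemma lam01_apply_qf_le (x : ℝ) : lam01 {u | qf η u ≤ x} = η (Set.Iic x) := by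
  have hset : {u | qf η u ≤ x} ∩ Set.Ioo (0:ℝ) 1 = Set.Iic (Fcdf η x) ∩ Set.Ioo (0:ℝ) 1 := by
    ext u
    simp only [Set.mem_inter_iff, Set.mem_setOf_eq, Set.mem_Iic]
    exact ⟨fun ⟨h, hu⟩ => ⟨(qf_le_iff hu).1 h, hu⟩, fun ⟨h, hu⟩ => ⟨(qf_le_iff hu).2 h, hu⟩⟩
  rw [lam01, Measure.restrict_apply' measurableSet_Ioo, hset]
  have h0 : (0:ℝ) ≤ Fcdf η x := Fcdf_nonneg η x
  have h1 : Fcdf η x ≤ 1 := Fcdf_le_one η x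
  have hη : η (Set.Iic x) = ENNReal.ofReal (Fcdf η x) := by
    rw [Fcdf_eq_cdf, ofReal_cdf]
  rw [hη]
  rcases lt_or_eq_of_le h1 with h1' | h1'
  · have : Set.Iic (Fcdf η x) ∩ Set.Ioo (0:ℝ) 1 = Set.Ioc 0 (Fcdf η x) := by
      ext u
      simp only [Set.mem_inter_iff, Set.mem_Iic, Set.mem_Ioo, Set.mem_Ioc]
      constructor
      · rintro ⟨h, hu0, _⟩; exact ⟨hu0, h⟩
      · rintro ⟨hu0, h⟩; exact ⟨h, hu0, lt_of_le_of_lt h h1'⟩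
    rw [this, Real.volume_Ioc, sub_zero]
  · have : Set.Iic (Fcdf η x) ∩ Set.Ioo (0:ℝ) 1 = Set.Ioo (0:ℝ) 1 := by
      rw [Set.inter_eq_right]
      intro u hu
      simp only [Set.mem_Iic, h1']
      exact hu.2.le
    rw [this, Real.volume_Ioo, ← h1']
    norm_num

lemma map_qf : lam01.map (qf η) = η := by
  have : IsProbabilityMeasure (lam01.map (qf η)) :=
    Measure.isProbabilityMeasure_map qf_aemeasurable
  refine Measure.ext_of_Iic (lam01.map (qf η)) η (fun x => ?_)
  rw [Measure.map_apply_of_aemeasurable qf_aemeasurable measurableSet_Iic]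
  exact lam01_apply_qf_le x

lemma integral_qf {g : ℝ → ℝ} (hg : AEStronglyMeasurable g η) :
    ∫ u, g (qf η u) ∂lam01 = ∫ x, g x ∂η := by
  have hg' : AEStronglyMeasurable g (lam01.map (qf η)) := by rw [map_qf]; exact hg
  rw [show ∫ x, g x ∂η = ∫ x, g x ∂(lam01.map (qf η)) by rw [map_qf]]
  exact (integral_map qf_aemeasurable hg').symm

lemma lam01_apply_lt_qf (s : ℝ) : lam01 {u | s < qf η u} = η (Set.Ioi s) := by
  have h1 : {u | s < qf η u} = {u | qf η u ≤ s}ᶜ := by ext u; simp [not_le]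
  have h2 : Set.Ioi s = (Set.Iic s)ᶜ := by simp
  have hms : MeasurableSet {u | qf η u ≤ s} → True := fun _ => trivial
  -- use measure_compl on both sides within lam01 restricted; instead compute directly
  have hset : {u | s < qf η u} ∩ Set.Ioo (0:ℝ) 1 = Set.Ioi (Fcdf η s) ∩ Set.Ioo (0:ℝ) 1 := by
    ext u
    simp only [Set.mem_inter_iff, Set.mem_setOf_eq, Set.mem_Ioi]
    exact ⟨fun ⟨h, hu⟩ => ⟨(lt_qf_iff hu).1 h, hu⟩, fun ⟨h, hu⟩ => ⟨(lt_qf_iff hu).2 h, hu⟩⟩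
  rw [lam01, Measure.restrict_apply' measurableSet_Ioo, hset]
  have h0 : (0:ℝ) ≤ Fcdf η s := Fcdf_nonneg η s
  have h1' : Fcdf η s ≤ 1 := Fcdf_le_one η s
  have : Set.Ioi (Fcdf η s) ∩ Set.Ioo (0:ℝ) 1 = Set.Ioo (Fcdf η s) 1 := by
    ext u
    simp only [Set.mem_inter_iff, Set.mem_Ioi, Set.mem_Ioo]
    exact ⟨fun ⟨h, _, hu1⟩ => ⟨h, hu1⟩, fun ⟨h, hu1⟩ => ⟨h, lt_of_le_of_lt h0 h, hu1⟩⟩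
  rw [this, Real.volume_Ioo]
  have hη : η (Set.Ioi s) = 1 - η (Set.Iic s) := by
    rw [h2, measure_compl measurableSet_Iic (measure_ne_top η _), measure_univ]
  rw [hη, Fcdf_eq_cdf, ← ofReal_cdf η s, ← ENNReal.ofReal_one, ← ENNReal.ofReal_sub _ (cdf_nonneg η s)]

end Push

section Efn

/-- `efn x s = 1_{s < x} - 1_{s < 0}`, an indicator of the interval between `0` and `x`. -/
noncomputable def efn (x s : ℝ) : ℝ :=
  Set.indicator (Set.Ico 0 x) (fun _ => (1:ℝ)) s - Set.indicator (Set.Ico x 0) (fun _ => (1:ℝ)) s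

lemma efn_eq (x s : ℝ) :
    efn x s = (if s < x then (1:ℝ) else 0) - (if s < 0 then (1:ℝ) else 0) := by
  simp only [efn, Set.indicator_apply, Set.mem_Ico]
  rcases lt_or_ge s x with h1 | h1 <;> rcases lt_or_ge s 0 with h2 | h2
  · simp [h1, h2, not_le.2 h1, not_le.2 h2]
  · simp [h1, h2, not_lt.2 h2, not_le.2 h1]
  · simp [h1, h2, not_lt.2 h1, not_le.2 h2]
  · simp [not_lt.2 h1, not_lt.2 h2]

lemma measurable_efn : Measurable fun p : ℝ × ℝ => efn p.1 p.2 := by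
  have : (fun p : ℝ × ℝ => efn p.1 p.2) = fun p =>
      (if p.2 < p.1 then (1:ℝ) else 0) - (if p.2 < 0 then (1:ℝ) else 0) := by
    funext p; exact efn_eq p.1 p.2
  rw [this]
  refine Measurable.sub ?_ ?_
  · exact Measurable.ite (measurableSet_lt measurable_snd measurable_fst)
      measurable_const measurable_const
  · exact Measurable.ite (measurableSet_lt measurable_snd measurable_const)
      measurable_const measurable_const

lemma measurable_efn_left (x : ℝ) : Measurable (efn x) :=
  measurable_efn.comp (measurable_const.prodMk measurable_id)

lemma integrable_efn (x : ℝ) : Integrable (efn x) (volume : Measure ℝ) := by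
  refine Integrable.sub ?_ ?_ <;>
  · rw [integrable_indicator_iff measurableSet_Ico]
    exact integrableOn_const (by rw [Real.volume_Ico]; exact ENNReal.ofReal_ne_top)

lemma integral_efn (x : ℝ) : ∫ s, efn x s = x := by
  unfold efn
  rw [integral_sub, integral_indicator_const _ measurableSet_Ico,
    integral_indicator_const _ measurableSet_Ico]
  · simp only [smul_eq_mul, mul_one, measureReal_def, Real.volume_Ico, sub_zero, zero_sub]
    rcases le_or_gt 0 x with hx | hx
    · rw [ENNReal.toReal_ofReal hx, ENNReal.ofReal_of_nonpos (by linarith), ENNReal.toReal_zero,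
        sub_zero]
    · rw [ENNReal.ofReal_of_nonpos (by linarith), ENNReal.toReal_zero,
        ENNReal.toReal_ofReal (by linarith)]
      ring
  · rw [integrable_indicator_iff measurableSet_Ico]
    exact integrableOn_const (by rw [Real.volume_Ico]; exact ENNReal.ofReal_ne_top)
  · rw [integrable_indicator_iff measurableSet_Ico]
    exact integrableOn_const (by rw [Real.volume_Ico]; exact ENNReal.ofReal_ne_top)

lemma integral_abs_efn (x : ℝ) : ∫ s, |efn x s| = |x| := by
  rcases le_or_gt 0 x with hx | hx
  · have h1 : Set.Ico x 0 = ∅ := Set.Ico_eq_empty (by simp; linarith)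
    have : ∀ s, |efn x s| = efn x s := by
      intro s
      unfold efn
      rw [h1]
      simp only [Set.indicator_empty, Pi.zero_apply, sub_zero]
      exact abs_of_nonneg (Set.indicator_nonneg (fun _ _ => zero_le_one) s)
    rw [show (fun s => |efn x s|) = efn x from funext this, integral_efn, abs_of_nonneg hx]
  · have h1 : Set.Ico 0 x = ∅ := Set.Ico_eq_empty (by simp; linarith)
    have : ∀ s, |efn x s| = - efn x s := by
      intro s
      unfold efn
      rw [h1]
      simp only [Set.indicator_empty, Pi.zero_apply, zero_sub, abs_neg, neg_neg]
      exact abs_of_nonneg (Set.indicator_nonneg (fun _ _ => zero_le_one) s)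
    rw [show (fun s => |efn x s|) = fun s => - efn x s from funext this, integral_neg,
      integral_efn, abs_of_neg hx]

lemma integral_efn_mul (x y : ℝ) :
    ∫ q : ℝ × ℝ, efn x q.1 * efn y q.2 ∂((volume : Measure ℝ).prod volume) = x * y := by
  rw [integral_prod_mul, integral_efn, integral_efn]

lemma integral_abs_efn_mul (x y : ℝ) :
    ∫ q : ℝ × ℝ, |efn x q.1| * |efn y q.2| ∂((volume : Measure ℝ).prod volume) = |x| * |y| := by
  rw [integral_prod_mul (f := fun s => |efn x s|) (g := fun s => |efn y s|), integral_abs_efn, integral_abs_efn]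

end Efn

section Hoeffding

variable {μ ν : Measure ℝ} [IsProbabilityMeasure μ] [IsProbabilityMeasure ν]

lemma IsCoupling.isProbabilityMeasure {π : Measure (ℝ × ℝ)} (hπ : IsCoupling π μ ν) :
    IsProbabilityMeasure π := by
  constructor
  have h : π.map Prod.fst Set.univ = 1 := by rw [hπ.1]; exact measure_univ
  rwa [Measure.map_apply measurable_fst MeasurableSet.univ, Set.preimage_univ] at h

lemma ite_mul_expand (A B C D : Prop) [Decidable A] [Decidable B] [Decidable C] [Decidable D] :
    ((if A then (1:ℝ) else 0) - (if B then (1:ℝ) else 0)) *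
      ((if C then (1:ℝ) else 0) - (if D then (1:ℝ) else 0)) =
    (if A ∧ C then (1:ℝ) else 0) - (if A ∧ D then (1:ℝ) else 0)
      - (if B ∧ C then (1:ℝ) else 0) + (if B ∧ D then (1:ℝ) else 0) := by
  by_cases hA : A <;> by_cases hB : B <;> by_cases hC : C <;> by_cases hD : D <;>
    simp [hA, hB, hC, hD]

lemma measurableSet_S11 (s t : ℝ) : MeasurableSet {p : ℝ × ℝ | s < p.1 ∧ t < p.2} :=
  (measurable_fst measurableSet_Ioi).inter (measurable_snd measurableSet_Ioi)

lemma integral_efn_pair (θ : Measure (ℝ × ℝ)) [IsFiniteMeasure θ] (s t : ℝ) :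
    ∫ p, efn p.1 s * efn p.2 t ∂θ =
      (θ {p : ℝ × ℝ | s < p.1 ∧ t < p.2}).toReal - (θ {p : ℝ × ℝ | s < p.1 ∧ t < 0}).toReal
        - (θ {p : ℝ × ℝ | s < 0 ∧ t < p.2}).toReal + (θ {p : ℝ × ℝ | s < 0 ∧ t < 0}).toReal := by
  have m11 := measurableSet_S11 s t
  have m10 : MeasurableSet {p : ℝ × ℝ | s < p.1 ∧ t < 0} :=
    (measurable_fst measurableSet_Ioi).inter (MeasurableSet.const _)
  have m01 : MeasurableSet {p : ℝ × ℝ | s < 0 ∧ t < p.2} :=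
    (MeasurableSet.const _).inter (measurable_snd measurableSet_Ioi)
  have m00 : MeasurableSet {p : ℝ × ℝ | s < 0 ∧ t < 0} := MeasurableSet.const _
  have hpt : (fun p : ℝ × ℝ => efn p.1 s * efn p.2 t) = fun p =>
      Set.indicator {p : ℝ × ℝ | s < p.1 ∧ t < p.2} (fun _ => (1:ℝ)) p
      - Set.indicator {p : ℝ × ℝ | s < p.1 ∧ t < 0} (fun _ => (1:ℝ)) p
      - Set.indicator {p : ℝ × ℝ | s < 0 ∧ t < p.2} (fun _ => (1:ℝ)) p
      + Set.indicator {p : ℝ × ℝ | s < 0 ∧ t < 0} (fun _ => (1:ℝ)) p := by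
    funext p
    simp only [efn_eq, Set.indicator_apply, Set.mem_setOf_eq]
    exact ite_mul_expand _ _ _ _
  have i11 : Integrable (Set.indicator {p : ℝ × ℝ | s < p.1 ∧ t < p.2} (fun _ => (1:ℝ))) θ :=
    (integrable_const (1:ℝ)).indicator m11
  have i10 : Integrable (Set.indicator {p : ℝ × ℝ | s < p.1 ∧ t < 0} (fun _ => (1:ℝ))) θ :=
    (integrable_const (1:ℝ)).indicator m10
  have i01 : Integrable (Set.indicator {p : ℝ × ℝ | s < 0 ∧ t < p.2} (fun _ => (1:ℝ))) θ :=
    (integrable_const (1:ℝ)).indicator m01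
  have i00 : Integrable (Set.indicator {p : ℝ × ℝ | s < 0 ∧ t < 0} (fun _ => (1:ℝ))) θ :=
    (integrable_const (1:ℝ)).indicator m00
  set f11 := Set.indicator {p : ℝ × ℝ | s < p.1 ∧ t < p.2} (fun _ => (1:ℝ)) with hf11
  set f10 := Set.indicator {p : ℝ × ℝ | s < p.1 ∧ t < 0} (fun _ => (1:ℝ)) with hf10
  set f01 := Set.indicator {p : ℝ × ℝ | s < 0 ∧ t < p.2} (fun _ => (1:ℝ)) with hf01
  set f00 := Set.indicator {p : ℝ × ℝ | s < 0 ∧ t < 0} (fun _ => (1:ℝ)) with hf00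
  have ia : Integrable (fun p => f11 p - f10 p) θ := i11.sub i10
  have ib : Integrable (fun p => (f11 p - f10 p) - f01 p) θ := ia.sub i01
  rw [hpt]
  rw [show ∫ p, f11 p - f10 p - f01 p + f00 p ∂θ =
      ((∫ p, f11 p ∂θ - ∫ p, f10 p ∂θ) - ∫ p, f01 p ∂θ) + ∫ p, f00 p ∂θ by
    rw [integral_add ib i00, integral_sub ia i01, integral_sub i11 i10]]
  rw [hf11, hf10, hf01, hf00]
  rw [
    integral_indicator_const _ m11, integral_indicator_const _ m10,
    integral_indicator_const _ m01, integral_indicator_const _ m00]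
  simp [measureReal_def]

lemma coupling_fst_apply {π : Measure (ℝ × ℝ)} (hπ : IsCoupling π μ ν) (s : ℝ) :
    π {p : ℝ × ℝ | s < p.1} = μ (Set.Ioi s) := by
  have : {p : ℝ × ℝ | s < p.1} = Prod.fst ⁻¹' Set.Ioi s := rfl
  rw [this, ← Measure.map_apply measurable_fst measurableSet_Ioi, hπ.1]

lemma coupling_snd_apply {π : Measure (ℝ × ℝ)} (hπ : IsCoupling π μ ν) (t : ℝ) :
    π {p : ℝ × ℝ | t < p.2} = ν (Set.Ioi t) := by
  have : {p : ℝ × ℝ | t < p.2} = Prod.snd ⁻¹' Set.Ioi t := rfl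
  rw [this, ← Measure.map_apply measurable_snd measurableSet_Ioi, hπ.2]

lemma integral_efn_pair_le {π χ : Measure (ℝ × ℝ)} (hπ : IsCoupling π μ ν)
    (hχ : IsCoupling χ μ ν) (s t : ℝ)
    (h : π {p : ℝ × ℝ | s < p.1 ∧ t < p.2} ≤ χ {p : ℝ × ℝ | s < p.1 ∧ t < p.2}) :
    ∫ p, efn p.1 s * efn p.2 t ∂π ≤ ∫ p, efn p.1 s * efn p.2 t ∂χ := by
  have : IsProbabilityMeasure π := hπ.isProbabilityMeasure
  have : IsProbabilityMeasure χ := hχ.isProbabilityMeasure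
  rw [integral_efn_pair, integral_efn_pair]
  have e10 : π {p : ℝ × ℝ | s < p.1 ∧ t < 0} = χ {p : ℝ × ℝ | s < p.1 ∧ t < 0} := by
    by_cases ht : t < 0
    · simp only [ht, and_true]
      rw [coupling_fst_apply hπ, coupling_fst_apply hχ]
    · simp [ht]
  have e01 : π {p : ℝ × ℝ | s < 0 ∧ t < p.2} = χ {p : ℝ × ℝ | s < 0 ∧ t < p.2} := by
    by_cases hs : s < 0
    · simp only [hs, true_and]
      rw [coupling_snd_apply hπ, coupling_snd_apply hχ]
    · simp [hs]
  have e00 : π {p : ℝ × ℝ | s < 0 ∧ t < 0} = χ {p : ℝ × ℝ | s < 0 ∧ t < 0} := by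
    by_cases hst : s < 0 ∧ t < 0
    · have hu : {p : ℝ × ℝ | s < 0 ∧ t < 0} = Set.univ := by ext p; simpa using hst
      rw [hu, measure_univ, measure_univ]
    · have hu : {p : ℝ × ℝ | s < 0 ∧ t < 0} = (∅ : Set (ℝ × ℝ)) := by ext p; simpa using hst
      rw [hu, measure_empty, measure_empty]
  rw [e10, e01, e00]
  have h' : (π {p : ℝ × ℝ | s < p.1 ∧ t < p.2}).toReal ≤
      (χ {p : ℝ × ℝ | s < p.1 ∧ t < p.2}).toReal :=
    ENNReal.toReal_mono (measure_ne_top χ _) h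
  linarith

end Hoeffding

section Fubini

open Function

lemma aestronglyMeasurable_efn_pair (θ : Measure (ℝ × ℝ)) :
    AEStronglyMeasurable (uncurry fun p q : ℝ × ℝ => efn p.1 q.1 * efn p.2 q.2)
      (θ.prod ((volume : Measure ℝ).prod volume)) := by
  have : (uncurry fun p q : ℝ × ℝ => efn p.1 q.1 * efn p.2 q.2)
      = fun r : (ℝ × ℝ) × (ℝ × ℝ) => efn r.1.1 r.2.1 * efn r.1.2 r.2.2 := rfl
  rw [this]
  exact ((measurable_efn.comp ((measurable_fst.fst).prodMk (measurable_snd.fst))).mul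
    (measurable_efn.comp ((measurable_fst.snd).prodMk (measurable_snd.snd)))).aestronglyMeasurable

lemma integrable_efn_uncurry (θ : Measure (ℝ × ℝ)) [IsFiniteMeasure θ]
    (hint : Integrable (fun p : ℝ × ℝ => |p.1| * |p.2|) θ) :
    Integrable (uncurry fun p q : ℝ × ℝ => efn p.1 q.1 * efn p.2 q.2)
      (θ.prod ((volume : Measure ℝ).prod volume)) := by
  rw [integrable_prod_iff (aestronglyMeasurable_efn_pair θ)]
  constructor
  · exact Filter.Eventually.of_forall fun p => (integrable_efn p.1).mul_prod (integrable_efn p.2)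
  · have key : ∀ p : ℝ × ℝ, (∫ y : ℝ × ℝ,
        ‖Function.uncurry (fun p q : ℝ × ℝ => efn p.1 q.1 * efn p.2 q.2) (p, y)‖
          ∂((volume : Measure ℝ).prod volume)) = |p.1| * |p.2| := by
      intro p
      have he : (fun y : ℝ × ℝ =>
          ‖Function.uncurry (fun p q : ℝ × ℝ => efn p.1 q.1 * efn p.2 q.2) (p, y)‖)
          = fun q : ℝ × ℝ => |efn p.1 q.1| * |efn p.2 q.2| := by
        funext q
        simp [Function.uncurry, abs_mul]
      rw [he, integral_abs_efn_mul]
    exact hint.congr (Filter.Eventually.of_forall fun p => (key p).symm)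

lemma integral_mul_eq_iint (θ : Measure (ℝ × ℝ)) [IsFiniteMeasure θ]
    (hint : Integrable (fun p : ℝ × ℝ => |p.1| * |p.2|) θ) :
    ∫ p : ℝ × ℝ, p.1 * p.2 ∂θ =
      ∫ q : ℝ × ℝ, (∫ p : ℝ × ℝ, efn p.1 q.1 * efn p.2 q.2 ∂θ)
        ∂((volume : Measure ℝ).prod volume) := by
  have hswap := integral_integral_swap (integrable_efn_uncurry θ hint)
  have hl : ∫ p : ℝ × ℝ, (∫ q : ℝ × ℝ, efn p.1 q.1 * efn p.2 q.2
      ∂((volume : Measure ℝ).prod volume)) ∂θ = ∫ p : ℝ × ℝ, p.1 * p.2 ∂θ := by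
    congr 1; funext p; exact integral_efn_mul p.1 p.2
  rw [← hl, hswap]

lemma integrable_inner_efn (θ : Measure (ℝ × ℝ)) [IsFiniteMeasure θ]
    (hint : Integrable (fun p : ℝ × ℝ => |p.1| * |p.2|) θ) :
    Integrable (fun q : ℝ × ℝ => ∫ p : ℝ × ℝ, efn p.1 q.1 * efn p.2 q.2 ∂θ)
      ((volume : Measure ℝ).prod volume) := by
  have h := ((integrable_efn_uncurry θ hint).swap).integral_prod_left
  exact h

end Fubini

section ChiCom

variable (μ ν : Measure ℝ) [IsProbabilityMeasure μ] [IsProbabilityMeasure ν]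

/-- The comonotone (Hoeffding–Fréchet) coupling. -/
noncomputable def chiCom : Measure (ℝ × ℝ) := lam01.map (fun u => (qf μ u, qf ν u))

lemma aemeasurable_qf_pair : AEMeasurable (fun u => (qf μ u, qf ν u)) lam01 :=
  AEMeasurable.prodMk qf_aemeasurable qf_aemeasurable

lemma chiCom_isCoupling : IsCoupling (chiCom μ ν) μ ν := by
  constructor
  · rw [chiCom, AEMeasurable.map_map_of_aemeasurable measurable_fst.aemeasurable
      (aemeasurable_qf_pair μ ν)]
    exact map_qf
  · rw [chiCom, AEMeasurable.map_map_of_aemeasurable measurable_snd.aemeasurable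
      (aemeasurable_qf_pair μ ν)]
    exact map_qf

lemma survival_eq (η : Measure ℝ) [IsProbabilityMeasure η] (s : ℝ) :
    η (Set.Ioi s) = ENNReal.ofReal (1 - Fcdf η s) := by
  rw [show Set.Ioi s = (Set.Iic s)ᶜ by simp,
    measure_compl measurableSet_Iic (measure_ne_top η _), measure_univ, Fcdf_eq_cdf,
    ← ofReal_cdf η s, ← ENNReal.ofReal_one, ← ENNReal.ofReal_sub _ (cdf_nonneg η s)]

lemma chiCom_survival (s t : ℝ) :
    chiCom μ ν {p : ℝ × ℝ | s < p.1 ∧ t < p.2} = min (μ (Set.Ioi s)) (ν (Set.Ioi t)) := by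
  rw [chiCom, Measure.map_apply_of_aemeasurable (aemeasurable_qf_pair μ ν) (measurableSet_S11 s t)]
  have hpre : (fun u => (qf μ u, qf ν u)) ⁻¹' {p : ℝ × ℝ | s < p.1 ∧ t < p.2}
      = {u | s < qf μ u ∧ t < qf ν u} := rfl
  rw [hpre]
  set a := Fcdf μ s with ha
  set b := Fcdf ν t with hb
  have ha0 : 0 ≤ a := Fcdf_nonneg μ s
  have hb0 : 0 ≤ b := Fcdf_nonneg ν t
  have ha1 : a ≤ 1 := Fcdf_le_one μ s
  have hb1 : b ≤ 1 := Fcdf_le_one ν t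
  have hset : {u | s < qf μ u ∧ t < qf ν u} ∩ Set.Ioo (0:ℝ) 1 = Set.Ioo (max a b) 1 := by
    ext u
    simp only [Set.mem_inter_iff, Set.mem_setOf_eq, Set.mem_Ioo, max_lt_iff]
    constructor
    · rintro ⟨⟨h1, h2⟩, hu⟩
      exact ⟨⟨(lt_qf_iff hu).1 h1, (lt_qf_iff hu).1 h2⟩, hu.2⟩
    · rintro ⟨⟨h1, h2⟩, hu1⟩
      have hu : u ∈ Set.Ioo (0:ℝ) 1 := ⟨lt_of_le_of_lt ha0 h1, hu1⟩
      exact ⟨⟨(lt_qf_iff hu).2 h1, (lt_qf_iff hu).2 h2⟩, hu⟩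
  rw [lam01, Measure.restrict_apply' measurableSet_Ioo, hset, Real.volume_Ioo,
    survival_eq μ s, survival_eq ν t, ← ha, ← hb]
  rcases le_total a b with hab | hab
  · rw [max_eq_right hab, min_eq_right (ENNReal.ofReal_le_ofReal (by linarith))]
  · rw [max_eq_left hab, min_eq_left (ENNReal.ofReal_le_ofReal (by linarith))]

end ChiCom

section HoeffdingMain

variable {μ ν : Measure ℝ} [IsProbabilityMeasure μ] [IsProbabilityMeasure ν]

lemma coupling_integrable_fst_sq {π : Measure (ℝ × ℝ)} (hπ : IsCoupling π μ ν)
    (hμ2 : Integrable (fun x : ℝ => x ^ 2) μ) : Integrable (fun p : ℝ × ℝ => p.1 ^ 2) π := by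
  have hg : AEStronglyMeasurable (fun x : ℝ => x ^ 2) (π.map Prod.fst) :=
    (continuous_pow 2).aestronglyMeasurable
  have h := (integrable_map_measure hg measurable_fst.aemeasurable).1 (by rwa [hπ.1])
  exact h

lemma coupling_integrable_snd_sq {π : Measure (ℝ × ℝ)} (hπ : IsCoupling π μ ν)
    (hν2 : Integrable (fun x : ℝ => x ^ 2) ν) : Integrable (fun p : ℝ × ℝ => p.2 ^ 2) π := by
  have hg : AEStronglyMeasurable (fun x : ℝ => x ^ 2) (π.map Prod.snd) :=
    (continuous_pow 2).aestronglyMeasurable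
  have h := (integrable_map_measure hg measurable_snd.aemeasurable).1 (by rwa [hπ.2])
  exact h

lemma coupling_integrable_absmul {π : Measure (ℝ × ℝ)} (hπ : IsCoupling π μ ν)
    (hμ2 : Integrable (fun x : ℝ => x ^ 2) μ) (hν2 : Integrable (fun x : ℝ => x ^ 2) ν) :
    Integrable (fun p : ℝ × ℝ => |p.1| * |p.2|) π := by
  have iadd : Integrable (fun p : ℝ × ℝ => (1/2 : ℝ) * (p.1 ^ 2 + p.2 ^ 2)) π :=
    ((coupling_integrable_fst_sq hπ hμ2).add (coupling_integrable_snd_sq hπ hν2)).const_mul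
      (1/2 : ℝ)
  refine Integrable.mono' iadd
    ((measurable_fst.abs.mul measurable_snd.abs).aestronglyMeasurable)
    (Filter.Eventually.of_forall fun p => ?_)
  rw [Real.norm_eq_abs, abs_of_nonneg (mul_nonneg (abs_nonneg _) (abs_nonneg _))]
  nlinarith [sq_nonneg (|p.1| - |p.2|), sq_abs p.1, sq_abs p.2]

lemma coupling_integrable_mul {π : Measure (ℝ × ℝ)} (hπ : IsCoupling π μ ν)
    (hμ2 : Integrable (fun x : ℝ => x ^ 2) μ) (hν2 : Integrable (fun x : ℝ => x ^ 2) ν) :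
    Integrable (fun p : ℝ × ℝ => p.1 * p.2) π := by
  refine Integrable.mono' (coupling_integrable_absmul hπ hμ2 hν2)
    ((measurable_fst.mul measurable_snd).aestronglyMeasurable)
    (Filter.Eventually.of_forall fun p => ?_)
  rw [Real.norm_eq_abs, abs_mul]

lemma integral_mul_le_comono {π : Measure (ℝ × ℝ)} (hπ : IsCoupling π μ ν)
    (hμ2 : Integrable (fun x : ℝ => x ^ 2) μ) (hν2 : Integrable (fun x : ℝ => x ^ 2) ν) :
    ∫ p : ℝ × ℝ, p.1 * p.2 ∂π ≤ ∫ u, qf μ u * qf ν u ∂lam01 := by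
  have hχ := chiCom_isCoupling μ ν
  haveI : IsProbabilityMeasure π := hπ.isProbabilityMeasure
  haveI : IsProbabilityMeasure (chiCom μ ν) := hχ.isProbabilityMeasure
  have hiπ := coupling_integrable_absmul hπ hμ2 hν2
  have hiχ := coupling_integrable_absmul hχ hμ2 hν2
  have hmono : ∫ q : ℝ × ℝ, (∫ p : ℝ × ℝ, efn p.1 q.1 * efn p.2 q.2 ∂π)
      ∂((volume : Measure ℝ).prod volume)
      ≤ ∫ q : ℝ × ℝ, (∫ p : ℝ × ℝ, efn p.1 q.1 * efn p.2 q.2 ∂(chiCom μ ν))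
      ∂((volume : Measure ℝ).prod volume) := by
    refine integral_mono (integrable_inner_efn π hiπ) (integrable_inner_efn _ hiχ) fun q => ?_
    refine integral_efn_pair_le hπ hχ q.1 q.2 ?_
    rw [chiCom_survival μ ν q.1 q.2]
    refine le_min ?_ ?_
    · rw [← coupling_fst_apply hπ q.1]
      exact measure_mono fun p hp => hp.1
    · rw [← coupling_snd_apply hπ q.2]
      exact measure_mono fun p hp => hp.2
  have h1 := integral_mul_eq_iint π hiπ
  have h2 := integral_mul_eq_iint (chiCom μ ν) hiχ
  have h3 : ∫ p : ℝ × ℝ, p.1 * p.2 ∂(chiCom μ ν) = ∫ u, qf μ u * qf ν u ∂lam01 := by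
    rw [chiCom, integral_map (aemeasurable_qf_pair μ ν) (f := fun p : ℝ × ℝ => p.1 * p.2)
      ((measurable_fst.mul measurable_snd).aestronglyMeasurable)]
  rw [h1, ← h3, h2]
  exact hmono

lemma integrable_qf_sq (hμ2 : Integrable (fun x : ℝ => x ^ 2) μ) :
    Integrable (fun u => (qf μ u) ^ 2) lam01 := by
  have hg : AEStronglyMeasurable (fun x : ℝ => x ^ 2) (lam01.map (qf μ)) :=
    (continuous_pow 2).aestronglyMeasurable
  have h := (integrable_map_measure hg qf_aemeasurable).1 (by rwa [map_qf])
  exact h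

lemma integral_qf_sq (hμ2 : Integrable (fun x : ℝ => x ^ 2) μ) :
    ∫ u, (qf μ u) ^ 2 ∂lam01 = ∫ x, x ^ 2 ∂μ :=
  integral_qf ((continuous_pow 2).aestronglyMeasurable)

lemma integrable_qf_mul (hμ2 : Integrable (fun x : ℝ => x ^ 2) μ)
    (hν2 : Integrable (fun x : ℝ => x ^ 2) ν) :
    Integrable (fun u => qf μ u * qf ν u) lam01 := by
  have hχ := chiCom_isCoupling μ ν
  haveI : IsProbabilityMeasure (chiCom μ ν) := hχ.isProbabilityMeasure
  have h := coupling_integrable_mul hχ hμ2 hν2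
  rw [chiCom] at h
  have := (integrable_map_measure
    ((measurable_fst.mul measurable_snd).aestronglyMeasurable)
    (aemeasurable_qf_pair μ ν)).1 h
  exact this

lemma integral_fst_sq {π : Measure (ℝ × ℝ)} (hπ : IsCoupling π μ ν) :
    ∫ p : ℝ × ℝ, p.1 ^ 2 ∂π = ∫ x, x ^ 2 ∂μ := by
  rw [← hπ.1, integral_map measurable_fst.aemeasurable (continuous_pow 2).aestronglyMeasurable]

lemma integral_snd_sq {π : Measure (ℝ × ℝ)} (hπ : IsCoupling π μ ν) :
    ∫ p : ℝ × ℝ, p.2 ^ 2 ∂π = ∫ y, y ^ 2 ∂ν := by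
  rw [← hπ.2, integral_map measurable_snd.aemeasurable (continuous_pow 2).aestronglyMeasurable]

/-- The Hoeffding–Fréchet inequality for the quadratic cost. -/
lemma hoeffding_sq {π : Measure (ℝ × ℝ)} (hπ : IsCoupling π μ ν)
    (hμ2 : Integrable (fun x : ℝ => x ^ 2) μ) (hν2 : Integrable (fun x : ℝ => x ^ 2) ν) :
    ∫ u, (qf μ u - qf ν u) ^ 2 ∂lam01 ≤ ∫ p : ℝ × ℝ, (p.1 - p.2) ^ 2 ∂π := by
  haveI : IsProbabilityMeasure π := hπ.isProbabilityMeasure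
  have iμq := integrable_qf_sq hμ2
  have iνq := integrable_qf_sq hν2
  have icr := integrable_qf_mul hμ2 hν2
  have i1 := coupling_integrable_fst_sq hπ hμ2
  have i2 := coupling_integrable_snd_sq hπ hν2
  have icrπ := coupling_integrable_mul hπ hμ2 hν2
  have hL : (fun u => (qf μ u - qf ν u) ^ 2)
      = fun u => (qf μ u) ^ 2 + (qf ν u) ^ 2 - 2 * (qf μ u * qf ν u) :=
    funext fun u => by ring
  have hR : (fun p : ℝ × ℝ => (p.1 - p.2) ^ 2)
      = fun p : ℝ × ℝ => p.1 ^ 2 + p.2 ^ 2 - 2 * (p.1 * p.2) :=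
    funext fun p => by ring
  have iaddL : Integrable (fun u => (qf μ u) ^ 2 + (qf ν u) ^ 2) lam01 := iμq.add iνq
  have icr2 : Integrable (fun u => 2 * (qf μ u * qf ν u)) lam01 := icr.const_mul 2
  have iaddπ : Integrable (fun p : ℝ × ℝ => p.1 ^ 2 + p.2 ^ 2) π := i1.add i2
  have icrπ2 : Integrable (fun p : ℝ × ℝ => 2 * (p.1 * p.2)) π := icrπ.const_mul 2
  rw [hL, hR, integral_sub iaddL icr2, integral_sub iaddπ icrπ2, integral_add iμq iνq,
    integral_add i1 i2, integral_const_mul, integral_const_mul, integral_qf_sq hμ2,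
    integral_qf_sq hν2, integral_fst_sq hπ, integral_snd_sq hπ]
  have := integral_mul_le_comono hπ hμ2 hν2
  linarith

end HoeffdingMain

section WrEval

lemma abs_rpow_two (a : ℝ) : |a| ^ (2:ℝ) = a ^ 2 := by
  rw [show (2:ℝ) = ((2:ℕ):ℝ) by norm_num, Real.rpow_natCast, sq_abs]

lemma Wr_bddBelow (μ ν : Measure ℝ) :
    BddBelow {c | ∃ π : Measure (ℝ × ℝ), IsCoupling π μ ν ∧
      c = ∫ p, |p.1 - p.2| ^ (2:ℝ) ∂π} := by
  refine ⟨0, fun c hc => ?_⟩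
  obtain ⟨π, -, rfl⟩ := hc
  exact integral_nonneg fun p => Real.rpow_nonneg (abs_nonneg _) _

/-- The quadratic Wasserstein distance is attained by the comonotone coupling. -/
lemma Wr_two_eq (μ ν : Measure ℝ) [IsProbabilityMeasure μ] [IsProbabilityMeasure ν]
    (hμ2 : Integrable (fun x : ℝ => x ^ 2) μ) (hν2 : Integrable (fun x : ℝ => x ^ 2) ν) :
    Wr 2 μ ν = ∫ u, (qf μ u - qf ν u) ^ 2 ∂lam01 := by
  have habs : ∀ θ : Measure (ℝ × ℝ), ∫ p, |p.1 - p.2| ^ (2:ℝ) ∂θ = ∫ p, (p.1 - p.2) ^ 2 ∂θ := by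
    intro θ; congr 1; funext p; exact abs_rpow_two _
  have hmem : (∫ u, (qf μ u - qf ν u) ^ 2 ∂lam01) ∈ {c | ∃ π : Measure (ℝ × ℝ),
      IsCoupling π μ ν ∧ c = ∫ p, |p.1 - p.2| ^ (2:ℝ) ∂π} := by
    refine ⟨chiCom μ ν, chiCom_isCoupling μ ν, ?_⟩
    rw [habs, chiCom, integral_map (aemeasurable_qf_pair μ ν) (f := fun p : ℝ × ℝ => (p.1 - p.2) ^ 2)
      ((measurable_fst.sub measurable_snd).pow_const 2).aestronglyMeasurable]
  refine le_antisymm (csInf_le (Wr_bddBelow μ ν) hmem) (le_csInf ⟨_, hmem⟩ ?_)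
  rintro c ⟨π, hπ, rfl⟩
  rw [habs]
  exact hoeffding_sq hπ hμ2 hν2

/-- `W₂²` against a Dirac mass is just the second moment of the difference. -/
lemma Wr_two_dirac (θ : Measure ℝ) [IsProbabilityMeasure θ] (c : ℝ) :
    Wr 2 θ (Measure.dirac c) = ∫ y, (y - c) ^ 2 ∂θ := by
  have huni : ∀ d ∈ {d | ∃ π : Measure (ℝ × ℝ), IsCoupling π θ (Measure.dirac c) ∧
      d = ∫ p, |p.1 - p.2| ^ (2:ℝ) ∂π}, d = ∫ y, (y - c) ^ 2 ∂θ := by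
    rintro d ⟨π, hπ, rfl⟩
    have hsnd : ∀ᵐ p : ℝ × ℝ ∂π, p.2 = c := by
      have h0 : π (Prod.snd ⁻¹' ({c}ᶜ)) = 0 := by
        rw [← Measure.map_apply measurable_snd (measurableSet_singleton c).compl, hπ.2,
          Measure.dirac_apply' _ (measurableSet_singleton c).compl]
        simp
      have hset : {p : ℝ × ℝ | ¬ p.2 = c} = Prod.snd ⁻¹' ({c}ᶜ) := by ext p; simp
      rw [ae_iff, hset]
      exact h0
    calc ∫ p : ℝ × ℝ, |p.1 - p.2| ^ (2:ℝ) ∂π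
        = ∫ p : ℝ × ℝ, (p.1 - c) ^ 2 ∂π := by
          refine integral_congr_ae (hsnd.mono fun p hp => ?_)
          simp only [hp, abs_rpow_two]
      _ = ∫ x, (x - c) ^ 2 ∂(π.map Prod.fst) := by
          rw [integral_map measurable_fst.aemeasurable
            (Continuous.aestronglyMeasurable (by fun_prop : Continuous fun x : ℝ => (x - c) ^ 2))]
      _ = ∫ x, (x - c) ^ 2 ∂θ := by rw [hπ.1]
  have hmem : (∫ y, (y - c) ^ 2 ∂θ) ∈ {d | ∃ π : Measure (ℝ × ℝ),
      IsCoupling π θ (Measure.dirac c) ∧ d = ∫ p, |p.1 - p.2| ^ (2:ℝ) ∂π} := by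
    refine ⟨θ.prod (Measure.dirac c), ⟨?_, ?_⟩, ?_⟩
    · rw [Measure.map_fst_prod]; simp
    · rw [Measure.map_snd_prod]; simp
    · exact (huni _ ⟨θ.prod (Measure.dirac c), ⟨by rw [Measure.map_fst_prod]; simp,
        by rw [Measure.map_snd_prod]; simp⟩, rfl⟩).symm
  have hS : {d | ∃ π : Measure (ℝ × ℝ), IsCoupling π θ (Measure.dirac c) ∧
      d = ∫ p, |p.1 - p.2| ^ (2:ℝ) ∂π} = {∫ y, (y - c) ^ 2 ∂θ} :=
    Set.eq_singleton_iff_unique_mem.2 ⟨hmem, huni⟩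
  rw [Wr, hS, csInf_singleton]

end WrEval

section Kernel

variable {μ ν : Measure ℝ} [IsProbabilityMeasure μ] [IsProbabilityMeasure ν]
variable {m : ℝ → Measure ℝ}

/-- Second moment of the kernel measure, as a real number. -/
noncomputable def M2 (m : ℝ → Measure ℝ) (u : ℝ) : ℝ :=
  (∫⁻ y, ENNReal.ofReal (y ^ 2) ∂(m u)).toReal

lemma measurable_ofReal_sq : Measurable fun y : ℝ => ENNReal.ofReal (y ^ 2) :=
  ENNReal.measurable_ofReal.comp (measurable_id.pow_const 2)

lemma measurable_M2 (hm : Measurable m) : Measurable (M2 m) :=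
  ((Measure.measurable_lintegral measurable_ofReal_sq).comp hm).ennreal_toReal

lemma lintegral_sq_kernel (hm : IsLiftedMartingale μ ν m) :
    ∫⁻ u, (∫⁻ y, ENNReal.ofReal (y ^ 2) ∂(m u)) ∂lam01 = ∫⁻ y, ENNReal.ofReal (y ^ 2) ∂ν := by
  rw [← hm.1.2.2, Measure.lintegral_bind hm.1.1.aemeasurable measurable_ofReal_sq.aemeasurable]

lemma lintegral_sq_ne_top (hν2 : Integrable (fun x : ℝ => x ^ 2) ν) :
    ∫⁻ y, ENNReal.ofReal (y ^ 2) ∂ν ≠ ⊤ := by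
  have h := hν2.2
  rw [hasFiniteIntegral_iff_ofReal (Filter.Eventually.of_forall fun y => sq_nonneg y)] at h
  exact h.ne

/-- The good set of parameters `u`. -/
def GoodU (μ : Measure ℝ) (m : ℝ → Measure ℝ) (u : ℝ) : Prop :=
  (∫⁻ y, ENNReal.ofReal (y ^ 2) ∂(m u)) < ⊤ ∧ (∫ y, y ∂(m u)) = qf μ u

lemma ae_goodU (hm : IsLiftedMartingale μ ν m) (hν2 : Integrable (fun x : ℝ => x ^ 2) ν) :
    ∀ᵐ u ∂lam01, GoodU μ m u := by
  have h1 : ∀ᵐ u ∂lam01, (∫⁻ y, ENNReal.ofReal (y ^ 2) ∂(m u)) < ⊤ := by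
    refine ae_lt_top ((Measure.measurable_lintegral measurable_ofReal_sq).comp hm.1.1) ?_
    rw [lintegral_sq_kernel hm]
    exact lintegral_sq_ne_top hν2
  exact h1.and hm.2

lemma goodU_integrable_sq (hm : ∀ u, IsProbabilityMeasure (m u)) {u : ℝ}
    (hu : GoodU μ m u) : Integrable (fun y : ℝ => y ^ 2) (m u) := by
  haveI := hm u
  refine ⟨(continuous_pow 2).aestronglyMeasurable, ?_⟩
  rw [hasFiniteIntegral_iff_ofReal (Filter.Eventually.of_forall fun y => sq_nonneg y)]
  exact hu.1

lemma goodU_integrable_id (hm : ∀ u, IsProbabilityMeasure (m u)) {u : ℝ}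
    (hu : GoodU μ m u) : Integrable (fun y : ℝ => y) (m u) := by
  haveI := hm u
  have iadd : Integrable (fun y : ℝ => (1/2 : ℝ) * (y ^ 2 + 1)) (m u) :=
    ((goodU_integrable_sq hm hu).add (integrable_const 1)).const_mul (1/2 : ℝ)
  refine Integrable.mono' iadd measurable_id.aestronglyMeasurable
    (Filter.Eventually.of_forall fun y => ?_)
  rw [Real.norm_eq_abs]
  nlinarith [sq_nonneg (|y| - 1), sq_abs y, abs_nonneg y]

lemma M2_eq_integral (hm : ∀ u, IsProbabilityMeasure (m u)) {u : ℝ} (hu : GoodU μ m u) :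
    M2 m u = ∫ y, y ^ 2 ∂(m u) := by
  haveI := hm u
  rw [integral_eq_lintegral_of_nonneg_ae (Filter.Eventually.of_forall fun y => sq_nonneg y)
    (continuous_pow 2).aestronglyMeasurable, M2]

/-- Expansion of `W₂²(m u, δ_c)` using the martingale property. -/
lemma wr_dirac_expand (hm : ∀ u, IsProbabilityMeasure (m u)) {u : ℝ} (hu : GoodU μ m u)
    (c : ℝ) :
    Wr 2 (m u) (Measure.dirac c) = (M2 m u - (qf μ u) ^ 2) + (qf μ u - c) ^ 2 := by
  haveI := hm u
  rw [Wr_two_dirac (m u) c]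
  have hexp : (fun y : ℝ => (y - c) ^ 2) = fun y => y ^ 2 - (2 * c) * y + c ^ 2 :=
    funext fun y => by ring
  have i1 := goodU_integrable_sq hm hu
  have i2 : Integrable (fun y : ℝ => (2 * c) * y) (m u) :=
    (goodU_integrable_id hm hu).const_mul _
  have i12 : Integrable (fun y : ℝ => y ^ 2 - (2 * c) * y) (m u) := i1.sub i2
  rw [hexp, integral_add i12 (integrable_const _), integral_sub i1 i2, integral_const_mul,
    integral_const, M2_eq_integral hm hu, hu.2]
  haveI := hm u
  simp [measure_univ]
  ring

lemma integrable_M2 (hm : IsLiftedMartingale μ ν m)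
    (hν2 : Integrable (fun x : ℝ => x ^ 2) ν) : Integrable (M2 m) lam01 := by
  refine ⟨(measurable_M2 hm.1.1).aestronglyMeasurable, ?_⟩
  rw [hasFiniteIntegral_iff_ofReal (f := M2 m) (μ := lam01)
    (Filter.Eventually.of_forall fun u => ENNReal.toReal_nonneg)]
  have hle : ∫⁻ u, ENNReal.ofReal (M2 m u) ∂lam01
      ≤ ∫⁻ u, (∫⁻ y, ENNReal.ofReal (y ^ 2) ∂(m u)) ∂lam01 :=
    lintegral_mono fun u => ENNReal.ofReal_toReal_le
  exact lt_of_le_of_lt hle (lt_of_le_of_lt (le_of_eq (lintegral_sq_kernel hm))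
    (lt_top_iff_ne_top.2 (lintegral_sq_ne_top hν2)))

lemma integral_M2 (hm : IsLiftedMartingale μ ν m)
    (hν2 : Integrable (fun x : ℝ => x ^ 2) ν) : ∫ u, M2 m u ∂lam01 = ∫ y, y ^ 2 ∂ν := by
  have hgood := ae_goodU hm hν2
  have h1 : ∫ u, M2 m u ∂lam01
      = (∫⁻ u, ENNReal.ofReal (M2 m u) ∂lam01).toReal :=
    integral_eq_lintegral_of_nonneg_ae (Filter.Eventually.of_forall fun u =>
      ENNReal.toReal_nonneg) (measurable_M2 hm.1.1).aestronglyMeasurable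
  have h2 : ∫⁻ u, ENNReal.ofReal (M2 m u) ∂lam01
      = ∫⁻ u, (∫⁻ y, ENNReal.ofReal (y ^ 2) ∂(m u)) ∂lam01 := by
    refine lintegral_congr_ae (hgood.mono fun u hu => ?_)
    simp only [M2]
    rw [ENNReal.ofReal_toReal hu.1.ne]
  have h3 : ∫ y, y ^ 2 ∂ν = (∫⁻ y, ENNReal.ofReal (y ^ 2) ∂ν).toReal :=
    integral_eq_lintegral_of_nonneg_ae (Filter.Eventually.of_forall fun y => sq_nonneg y)
      (continuous_pow 2).aestronglyMeasurable
  rw [h1, h2, lintegral_sq_kernel hm, ← h3]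

end Kernel

section Decomp

variable {μ ν : Measure ℝ} [IsProbabilityMeasure μ] [IsProbabilityMeasure ν]
variable {m : ℝ → Measure ℝ} {χ : Measure (ℝ × ℝ)}

lemma lift_ae_fst (hχ : IsCoupling χ lam01 lam01) {P : ℝ → Prop}
    (h : ∀ᵐ u ∂lam01, P u) : ∀ᵐ q : ℝ × ℝ ∂χ, P q.1 :=
  ae_of_ae_map measurable_fst.aemeasurable (by rw [hχ.1]; exact h)

lemma lift_ae_snd (hχ : IsCoupling χ lam01 lam01) {P : ℝ → Prop}
    (h : ∀ᵐ u ∂lam01, P u) : ∀ᵐ q : ℝ × ℝ ∂χ, P q.2 :=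
  ae_of_ae_map measurable_snd.aemeasurable (by rw [hχ.2]; exact h)

lemma coupling_pull_fst (hχ : IsCoupling χ lam01 lam01) {g : ℝ → ℝ}
    (hg : Integrable g lam01) : Integrable (fun q : ℝ × ℝ => g q.1) χ :=
  (integrable_map_measure (by rw [hχ.1]; exact hg.1) measurable_fst.aemeasurable).1
    (by rw [hχ.1]; exact hg)

lemma coupling_pull_snd (hχ : IsCoupling χ lam01 lam01) {g : ℝ → ℝ}
    (hg : Integrable g lam01) : Integrable (fun q : ℝ × ℝ => g q.2) χ :=
  (integrable_map_measure (by rw [hχ.2]; exact hg.1) measurable_snd.aemeasurable).1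
    (by rw [hχ.2]; exact hg)

lemma coupling_integral_fst (hχ : IsCoupling χ lam01 lam01) {g : ℝ → ℝ}
    (hg : AEStronglyMeasurable g lam01) :
    ∫ q : ℝ × ℝ, g q.1 ∂χ = ∫ u, g u ∂lam01 := by
  rw [← hχ.1, integral_map measurable_fst.aemeasurable (by rw [hχ.1]; exact hg)]

lemma aemeasurable_qf_fst (hχ : IsCoupling χ lam01 lam01) :
    AEMeasurable (fun q : ℝ × ℝ => qf μ q.1) χ := by
  have h : AEMeasurable (qf μ) (χ.map Prod.fst) := by rw [hχ.1]; exact qf_aemeasurable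
  exact h.comp_aemeasurable measurable_fst.aemeasurable

lemma aemeasurable_qf_snd (hχ : IsCoupling χ lam01 lam01) :
    AEMeasurable (fun q : ℝ × ℝ => qf μ q.2) χ := by
  have h : AEMeasurable (qf μ) (χ.map Prod.snd) := by rw [hχ.2]; exact qf_aemeasurable
  exact h.comp_aemeasurable measurable_snd.aemeasurable

lemma integrable_F2 (hχ : IsCoupling χ lam01 lam01) {η η' : Measure ℝ}
    [IsProbabilityMeasure η] [IsProbabilityMeasure η']
    (hη2 : Integrable (fun x : ℝ => x ^ 2) η) (hη'2 : Integrable (fun x : ℝ => x ^ 2) η') :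
    Integrable (fun q : ℝ × ℝ => (qf η q.1 - qf η' q.2) ^ 2) χ := by
  have i1 : Integrable (fun q : ℝ × ℝ => (qf η q.1) ^ 2) χ :=
    coupling_pull_fst hχ (integrable_qf_sq hη2)
  have i2 : Integrable (fun q : ℝ × ℝ => (qf η' q.2) ^ 2) χ :=
    coupling_pull_snd hχ (integrable_qf_sq hη'2)
  have iadd : Integrable (fun q : ℝ × ℝ => 2 * (qf η q.1) ^ 2 + 2 * (qf η' q.2) ^ 2) χ :=
    (i1.const_mul 2).add (i2.const_mul 2)
  refine Integrable.mono' iadd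
    (((aemeasurable_qf_fst hχ).sub (aemeasurable_qf_snd hχ)).pow_const 2).aestronglyMeasurable
    (Filter.Eventually.of_forall fun q => ?_)
  rw [Real.norm_eq_abs, abs_of_nonneg (sq_nonneg _)]
  nlinarith [sq_nonneg (qf η q.1 + qf η' q.2)]

/-- Decomposition of the lifted cost against a coupling of `lam01` with itself. -/
lemma I_decomp (hm : IsLiftedMartingale μ ν m)
    (hμ2 : Integrable (fun x : ℝ => x ^ 2) μ) (hν2 : Integrable (fun x : ℝ => x ^ 2) ν)
    (hχ : IsCoupling χ lam01 lam01) :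
    ∫ q : ℝ × ℝ, (|q.1 - q.2| ^ (2:ℝ) + |qf μ q.1 - qf μ q.2| ^ (2:ℝ)
        + Wr 2 (m q.1) (Measure.dirac (qf ν q.2))) ∂χ
      = (∫ q : ℝ × ℝ, (q.1 - q.2) ^ 2 ∂χ) + (∫ q : ℝ × ℝ, (qf μ q.1 - qf μ q.2) ^ 2 ∂χ)
        + ((∫ y, y ^ 2 ∂ν) - ∫ x, x ^ 2 ∂μ)
        + ∫ q : ℝ × ℝ, (qf μ q.1 - qf ν q.2) ^ 2 ∂χ := by
  haveI : IsProbabilityMeasure χ := hχ.isProbabilityMeasure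
  have hprob := hm.1.2.1
  -- pointwise a.e. identification of the integrand
  have hae : ∀ᵐ q : ℝ × ℝ ∂χ, |q.1 - q.2| ^ (2:ℝ) + |qf μ q.1 - qf μ q.2| ^ (2:ℝ)
      + Wr 2 (m q.1) (Measure.dirac (qf ν q.2))
      = (q.1 - q.2) ^ 2 + (qf μ q.1 - qf μ q.2) ^ 2
        + ((M2 m q.1 - (qf μ q.1) ^ 2) + (qf μ q.1 - qf ν q.2) ^ 2) := by
    refine (lift_ae_fst hχ (ae_goodU hm hν2)).mono fun q hq => ?_
    rw [abs_rpow_two, abs_rpow_two, wr_dirac_expand hprob hq (qf ν q.2)]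
  -- integrability of the pieces
  have hmemIoo : ∀ᵐ u ∂lam01, u ∈ Set.Ioo (0:ℝ) 1 := ae_restrict_mem measurableSet_Ioo
  have iF1 : Integrable (fun q : ℝ × ℝ => (q.1 - q.2) ^ 2) χ := by
    refine Integrable.mono' (integrable_const (1:ℝ))
      ((measurable_fst.sub measurable_snd).pow_const 2).aestronglyMeasurable ?_
    refine ((lift_ae_fst hχ hmemIoo).and (lift_ae_snd hχ hmemIoo)).mono fun q hq => ?_
    rw [Real.norm_eq_abs, abs_of_nonneg (sq_nonneg _)]
    obtain ⟨⟨h1, h2⟩, h3, h4⟩ := hq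
    nlinarith
  have iF2 : Integrable (fun q : ℝ × ℝ => (qf μ q.1 - qf μ q.2) ^ 2) χ :=
    integrable_F2 hχ hμ2 hμ2
  have iF4 : Integrable (fun q : ℝ × ℝ => (qf μ q.1 - qf ν q.2) ^ 2) χ :=
    integrable_F2 hχ hμ2 hν2
  have iVr : Integrable (fun u => M2 m u - (qf μ u) ^ 2) lam01 :=
    (integrable_M2 hm hν2).sub (integrable_qf_sq hμ2)
  have iF3 : Integrable (fun q : ℝ × ℝ => M2 m q.1 - (qf μ q.1) ^ 2) χ :=
    coupling_pull_fst hχ iVr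
  -- put it together
  have hsum12 : Integrable (fun q : ℝ × ℝ => (q.1 - q.2) ^ 2 + (qf μ q.1 - qf μ q.2) ^ 2) χ :=
    iF1.add iF2
  have hsum34 : Integrable (fun q : ℝ × ℝ =>
      (M2 m q.1 - (qf μ q.1) ^ 2) + (qf μ q.1 - qf ν q.2) ^ 2) χ := iF3.add iF4
  rw [integral_congr_ae hae, integral_add hsum12 hsum34, integral_add iF1 iF2,
    integral_add iF3 iF4, coupling_integral_fst hχ iVr.1,
    integral_sub (integrable_M2 hm hν2) (integrable_qf_sq hμ2), integral_M2 hm hν2,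
    integral_qf_sq hμ2]
  ring

end Decomp

section FinalMain

lemma Wr_nonneg (μ ν : Measure ℝ) : 0 ≤ Wr 2 μ ν := by
  refine Real.sInf_nonneg fun c hc => ?_
  obtain ⟨π, -, rfl⟩ := hc
  exact integral_nonneg fun p => Real.rpow_nonneg (abs_nonneg _) _

lemma main_eq (μ ν : Measure ℝ) [IsProbabilityMeasure μ] [IsProbabilityMeasure ν]
    (hμ2 : Integrable (fun x => |x| ^ 2) μ) (hν2 : Integrable (fun x => |x| ^ 2) ν)
    (m : ℝ → Measure ℝ) (hm : IsLiftedMartingale μ ν m) :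
    lAWr 2 μ m μ (fun u => Measure.dirac (qf ν u)) =
      Wr 2 μ ν + (∫ y, |y| ^ 2 ∂ν) - ∫ x, |x| ^ 2 ∂μ := by
  have habs : (fun x : ℝ => |x| ^ 2) = fun x : ℝ => x ^ 2 := funext fun x => sq_abs x
  rw [habs] at hμ2 hν2
  have hIν : ∫ y, |y| ^ 2 ∂ν = ∫ y, y ^ 2 ∂ν := by rw [habs]
  have hIμ : ∫ x, |x| ^ 2 ∂μ = ∫ x, x ^ 2 ∂μ := by rw [habs]
  rw [hIν, hIμ]
  have hWr : Wr 2 μ ν = ∫ u, (qf μ u - qf ν u) ^ 2 ∂lam01 := Wr_two_eq μ ν hμ2 hν2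
  -- the identity (diagonal) coupling
  set χid : Measure (ℝ × ℝ) := lam01.map (fun u : ℝ => (u, u)) with hχid
  have hdiag : Measurable (fun u : ℝ => (u, u)) := measurable_id.prodMk measurable_id
  have hcoup : IsCoupling χid lam01 lam01 := by
    constructor
    · rw [hχid, Measure.map_map measurable_fst hdiag,
        show (Prod.fst ∘ fun u : ℝ => (u, u)) = id from rfl, Measure.map_id]
    · rw [hχid, Measure.map_map measurable_snd hdiag,
        show (Prod.snd ∘ fun u : ℝ => (u, u)) = id from rfl, Measure.map_id]
  -- value of the cost at the diagonal coupling
  have hval : ∫ q : ℝ × ℝ, (|q.1 - q.2| ^ (2:ℝ) + |qf μ q.1 - qf μ q.2| ^ (2:ℝ)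
      + Wr 2 (m q.1) (Measure.dirac (qf ν q.2))) ∂χid
      = (∫ u, (qf μ u - qf ν u) ^ 2 ∂lam01) + ((∫ y, y ^ 2 ∂ν) - ∫ x, x ^ 2 ∂μ) := by
    rw [I_decomp hm hμ2 hν2 hcoup]
    have h1 : ∫ q : ℝ × ℝ, (q.1 - q.2) ^ 2 ∂χid = 0 := by
      rw [hχid, integral_map hdiag.aemeasurable (f := fun p : ℝ × ℝ => (p.1 - p.2) ^ 2)
        ((measurable_fst.sub measurable_snd).pow_const 2).aestronglyMeasurable]
      simp
    have h2 : ∫ q : ℝ × ℝ, (qf μ q.1 - qf μ q.2) ^ 2 ∂χid = 0 := by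
      rw [hχid, integral_map hdiag.aemeasurable (integrable_F2 hcoup hμ2 hμ2).1]
      simp
    have h4 : ∫ q : ℝ × ℝ, (qf μ q.1 - qf ν q.2) ^ 2 ∂χid
        = ∫ u, (qf μ u - qf ν u) ^ 2 ∂lam01 := by
      rw [hχid, integral_map hdiag.aemeasurable (integrable_F2 hcoup hμ2 hν2).1]
    rw [h1, h2, h4]
    ring
  rw [lAWr]
  apply le_antisymm
  · refine csInf_le ⟨0, fun c hc => ?_⟩ ⟨χid, hcoup, ?_⟩
    · obtain ⟨χ, hχ, rfl⟩ := hc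
      refine integral_nonneg fun q => ?_
      have h1 := Real.rpow_nonneg (abs_nonneg (q.1 - q.2)) (2:ℝ)
      have h2 := Real.rpow_nonneg (abs_nonneg (qf μ q.1 - qf μ q.2)) (2:ℝ)
      have h3 := Wr_nonneg (m q.1) (Measure.dirac (qf ν q.2))
      positivity
    · rw [hval, hWr]
      ring
  · refine le_csInf ⟨_, χid, hcoup, rfl⟩ ?_
    rintro b ⟨χ, hχ, rfl⟩
    haveI : IsProbabilityMeasure χ := hχ.isProbabilityMeasure
    rw [show ∫ q : ℝ × ℝ, (|q.1 - q.2| ^ (2:ℝ) + |qf μ q.1 - qf μ q.2| ^ (2:ℝ)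
        + Wr 2 (m q.1) ((fun u => Measure.dirac (qf ν u)) q.2)) ∂χ
      = ∫ q : ℝ × ℝ, (|q.1 - q.2| ^ (2:ℝ) + |qf μ q.1 - qf μ q.2| ^ (2:ℝ)
        + Wr 2 (m q.1) (Measure.dirac (qf ν q.2))) ∂χ from rfl]
    rw [I_decomp hm hμ2 hν2 hχ, hWr]
    have nn1 : 0 ≤ ∫ q : ℝ × ℝ, (q.1 - q.2) ^ 2 ∂χ :=
      integral_nonneg fun q => sq_nonneg _
    have nn2 : 0 ≤ ∫ q : ℝ × ℝ, (qf μ q.1 - qf μ q.2) ^ 2 ∂χ :=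
      integral_nonneg fun q => sq_nonneg _
    have h4 : ∫ u, (qf μ u - qf ν u) ^ 2 ∂lam01 ≤ ∫ q : ℝ × ℝ, (qf μ q.1 - qf ν q.2) ^ 2 ∂χ := by
      have hpair : AEMeasurable (fun q : ℝ × ℝ => (qf μ q.1, qf ν q.2)) χ :=
        (aemeasurable_qf_fst hχ).prodMk (aemeasurable_qf_snd hχ)
      have hψ : IsCoupling (χ.map fun q : ℝ × ℝ => (qf μ q.1, qf ν q.2)) μ ν := by
        constructor
        · rw [AEMeasurable.map_map_of_aemeasurable measurable_fst.aemeasurable hpair,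
            show (Prod.fst ∘ fun q : ℝ × ℝ => (qf μ q.1, qf ν q.2))
              = (qf μ ∘ Prod.fst) from rfl,
            ← AEMeasurable.map_map_of_aemeasurable (g := qf μ)
              (by rw [hχ.1]; exact qf_aemeasurable) measurable_fst.aemeasurable, hχ.1, map_qf]
        · rw [AEMeasurable.map_map_of_aemeasurable measurable_snd.aemeasurable hpair,
            show (Prod.snd ∘ fun q : ℝ × ℝ => (qf μ q.1, qf ν q.2))
              = (qf ν ∘ Prod.snd) from rfl,
            ← AEMeasurable.map_map_of_aemeasurable (g := qf ν)
              (by rw [hχ.2]; exact qf_aemeasurable) measurable_snd.aemeasurable, hχ.2, map_qf]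
      have heval : ∫ p : ℝ × ℝ, |p.1 - p.2| ^ (2:ℝ)
          ∂(χ.map fun q : ℝ × ℝ => (qf μ q.1, qf ν q.2))
          = ∫ q : ℝ × ℝ, (qf μ q.1 - qf ν q.2) ^ 2 ∂χ := by
        rw [show (fun p : ℝ × ℝ => |p.1 - p.2| ^ (2:ℝ)) = fun p : ℝ × ℝ => (p.1 - p.2) ^ 2
          from funext fun p => abs_rpow_two _]
        rw [integral_map hpair (f := fun p : ℝ × ℝ => (p.1 - p.2) ^ 2) ((measurable_fst.sub measurable_snd).pow_const 2).aestronglyMeasurable]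
      have hle : Wr 2 μ ν ≤ ∫ q : ℝ × ℝ, (qf μ q.1 - qf ν q.2) ^ 2 ∂χ :=
        csInf_le (Wr_bddBelow μ ν) ⟨_, hψ, heval.symm⟩
      rw [hWr] at hle
      exact hle
    linarith

end FinalMain

/-- Proposition `liftedQuadraticMarReag`: for `μ ≤_cx ν` with finite second
moments, every lifted martingale coupling `M̂` between `μ` and `ν` satisfies
`ÂW₂²(M̂, π̂^{HF}) = W₂²(μ,ν) + ∫ |y|² ν(dy) - ∫ |x|² μ(dx)`; in particular this value does not
depend on `M̂`, so every lifted martingale coupling is an `ÂW₂`-minimal lifted martingale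
rearrangement coupling of `π̂^{HF}`. -/
theorem stmt10
    (μ ν : Measure ℝ) [IsProbabilityMeasure μ] [IsProbabilityMeasure ν]
    (hμ2 : Integrable (fun x => |x| ^ 2) μ) (hν2 : Integrable (fun x => |x| ^ 2) ν)
    (hcx : ConvexOrder μ ν)
    (m : ℝ → Measure ℝ) (hm : IsLiftedMartingale μ ν m) :
    lAWr 2 μ m μ (fun u => Measure.dirac (qf ν u)) =
      Wr 2 μ ν + (∫ y, |y| ^ 2 ∂ν) - ∫ x, |x| ^ 2 ∂μ ∧
    (∀ m' : ℝ → Measure ℝ, IsLiftedMartingale μ ν m' →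
      lAWr 2 μ m μ (fun u => Measure.dirac (qf ν u)) =
        lAWr 2 μ m' μ (fun u => Measure.dirac (qf ν u))) := by
  exact ⟨main_eq μ ν hμ2 hν2 m hm, fun m' hm' =>
    (main_eq μ ν hμ2 hν2 m hm).trans (main_eq μ ν hμ2 hν2 m' hm').symm⟩
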